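/- If A and B are history-deterministic labelled transition systems with equal trace languages L_T(A) = L_T(B), then A and B are in two-sided simulation relation. -/
import Mathlib


/-- A labelled transition system over alphabet `A`. -/
structure LTS (A : Type) where
  Conf : Type
  init : Conf
  Step : Conf → A → Conf → Prop

/-- `Reads L c w` : there is a path from configuration `c` reading the word `w`. -/
inductive LTS.Reads {A : Type} (L : LTS A) : L.Conf → List A → Prop
  | nil (c : L.Conf) : LTS.Reads L c []
  | cons {c c' : L.Conf} {a : A} {w : List A} :
      L.Step c a c' → LTS.Reads L c' w → LTS.Reads L c (a :: w)

/-- The trace language of an LTS: all words readable from the initial configuration. -/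
def LTS.TraceLang {A : Type} (L : LTS A) : Set (List A) :=
  {w | L.Reads L.init w}

/-- `Simulates P Q` : `P` simulates `Q` (Duplicator plays in `P`, Spoiler in `Q`),
via a simulation relation containing the pair of initial configurations. -/
def Simulates {A : Type} (P Q : LTS A) : Prop :=
  ∃ S : P.Conf → Q.Conf → Prop, S P.init Q.init ∧
    ∀ cP cQ, S cP cQ → ∀ a cQ', Q.Step cQ a cQ' →
      ∃ cP', P.Step cP a cP' ∧ S cP' cQ'

/-- Two-sided simulation: each LTS simulates the other. -/
def TwoSidedSim {A : Type} (P Q : LTS A) : Prop :=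
  Simulates P Q ∧ Simulates Q P

/-- The run induced by a resolver `r` (a function of the history of the run,
the current configuration and the next letter) is valid along `w`:
every transition chosen by the resolver is enabled. -/
inductive ResolverRun {A : Type} (L : LTS A)
    (r : List (L.Conf × A) → L.Conf → A → L.Conf) :
    List (L.Conf × A) → L.Conf → List A → Prop
  | nil (h : List (L.Conf × A)) (c : L.Conf) : ResolverRun L r h c []
  | cons {h : List (L.Conf × A)} {c : L.Conf} {a : A} {w : List A} :
      L.Step c a (r h c a) →
      ResolverRun L r (h ++ [(c, a)]) (r h c a) w →
      ResolverRun L r h c (a :: w)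

/-- `r` is a resolver for `L`: following `r` from the initial configuration
produces a valid run over every word of the trace language. -/
def IsResolver {A : Type} (L : LTS A)
    (r : List (L.Conf × A) → L.Conf → A → L.Conf) : Prop :=
  ∀ w ∈ L.TraceLang, ResolverRun L r [] L.init w

/-- An LTS is history-deterministic if it admits a resolver. -/
def HistoryDeterministic {A : Type} (L : LTS A) : Prop :=
  ∃ r, IsResolver L r

/-- Paths with explicit endpoint. -/
inductive ReadsTo {A : Type} (L : LTS A) : L.Conf → List A → L.Conf → Prop
  | nil (c : L.Conf) : ReadsTo L c [] c
  | cons {c c' c'' : L.Conf} {a : A} {w : List A} :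
      L.Step c a c' → ReadsTo L c' w c'' → ReadsTo L c (a :: w) c''

lemma readsTo_reads {A : Type} (L : LTS A) {c w c'} (h : ReadsTo L c w c') :
    L.Reads c w := by
  induction h with
  | nil c => exact LTS.Reads.nil c
  | cons s _ ih => exact LTS.Reads.cons s ih

lemma readsTo_snoc {A : Type} (L : LTS A) {c w c' a c''}
    (h : ReadsTo L c w c') (s : L.Step c' a c'') : ReadsTo L c (w ++ [a]) c'' := by
  induction h with
  | nil c => exact ReadsTo.cons s (ReadsTo.nil _)
  | cons st _ ih => exact ReadsTo.cons st (ih s)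

/-- Follow the resolver along a word. -/
def followAux {A : Type} (L : LTS A) (r : List (L.Conf × A) → L.Conf → A → L.Conf) :
    List (L.Conf × A) → L.Conf → List A → List (L.Conf × A) × L.Conf
  | h, c, [] => (h, c)
  | h, c, a :: w => followAux L r (h ++ [(c, a)]) (r h c a) w

lemma followAux_snoc {A : Type} (L : LTS A) (r) (w : List A) :
    ∀ h c a, followAux L r h c (w ++ [a]) =
      ((followAux L r h c w).1 ++ [((followAux L r h c w).2, a)],
        r (followAux L r h c w).1 (followAux L r h c w).2 a) := by
  induction w with
  | nil => intro h c a; rfl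
  | cons b w ih => intro h c a; simpa [followAux] using ih _ _ a

lemma run_last {A : Type} (L : LTS A) (r) (w : List A) :
    ∀ h c a, ResolverRun L r h c (w ++ [a]) →
      L.Step (followAux L r h c w).2 a
        (r (followAux L r h c w).1 (followAux L r h c w).2 a) := by
  induction w with
  | nil =>
    intro h c a hr
    cases hr with
    | cons s _ => exact s
  | cons b w ih =>
    intro h c a hr
    cases hr with
    | cons s hr' => exact ih _ _ a hr'

/-- The one-sided version. -/
lemma simulates_of_resolver {A : Type} (P Q : LTS A)
    (r : List (P.Conf × A) → P.Conf → A → P.Conf) (hr : IsResolver P r)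
    (hsub : Q.TraceLang ⊆ P.TraceLang) : Simulates P Q := by
  refine ⟨fun cP cQ => ∃ w, ReadsTo Q Q.init w cQ ∧ cP = (followAux P r [] P.init w).2,
    ⟨[], ReadsTo.nil _, rfl⟩, ?_⟩
  rintro cP cQ ⟨w, hw, rfl⟩ a cQ' hstep
  have hw' : ReadsTo Q Q.init (w ++ [a]) cQ' := readsTo_snoc Q hw hstep
  have hmem : (w ++ [a]) ∈ P.TraceLang := hsub (readsTo_reads Q hw')
  have hrun := hr _ hmem
  refine ⟨(followAux P r [] P.init (w ++ [a])).2, ?_, ⟨w ++ [a], hw', rfl⟩⟩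
  rw [followAux_snoc]
  exact run_last P r w [] P.init a hrun

/-- If `A` and `B` are history-deterministic LTSs with equal trace languages,
then they are in two-sided simulation relation. -/
theorem hd_traceLang_eq_twoSidedSim {A : Type} (P Q : LTS A)
    (hP : HistoryDeterministic P) (hQ : HistoryDeterministic Q)
    (h : P.TraceLang = Q.TraceLang) : TwoSidedSim P Q := by
  obtain ⟨rP, hrP⟩ := hP
  obtain ⟨rQ, hrQ⟩ := hQ
  exact ⟨simulates_of_resolver P Q rP hrP (by rw [h]),
    simulates_of_resolver Q P rQ hrQ (by rw [h])⟩
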